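/- Every FP_n^{≤d}-projective R-module has projective dimension at most d. -/

import Mathlib

universe u

/-- `M` is a finitely `n`-presented `R`-module. -/
def FinNPres (R : Type u) [Ring R] : ℕ → (M : Type u) → [AddCommGroup M] → [Module R M] → Prop
  | 0, M, _, _ => Module.Finite R M
  | n+1, M, _, _ => ∃ (k : ℕ) (f : (Fin k → R) →ₗ[R] M), Function.Surjective f ∧
      FinNPres R n (LinearMap.ker f)

/-- `M` has projective dimension at most `d` (finite `d`). -/
def ProjDimLE (R : Type u) [Ring R] : ℕ → (M : Type u) → [AddCommGroup M] → [Module R M] → Prop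
  | 0, M, _, _ => Module.Projective R M
  | d+1, M, _, _ => ∃ (ι : Type u) (f : (ι →₀ R) →ₗ[R] M), Function.Surjective f ∧
      ProjDimLE R d (LinearMap.ker f)

/-- Projective dimension at most `d` for `d : ℕ∞`; `d = ⊤` imposes no condition. -/
def ProjDimLE' (R : Type u) [Ring R] (d : ℕ∞) (M : Type u) [AddCommGroup M] [Module R M] : Prop :=
  ∀ k : ℕ, (k : ℕ∞) = d → ProjDimLE R k M

/-- `Ext¹_R(M, N) = 0`, expressed by the splitting of all extensions of `M` by `N`. -/
def Ext1Zero (R : Type u) [Ring R] (M N : Type u) [AddCommGroup M] [Module R M]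
    [AddCommGroup N] [Module R N] : Prop :=
  ∀ (X : Type u) [AddCommGroup X] [Module R X] (i : N →ₗ[R] X) (p : X →ₗ[R] M),
    Function.Injective i → Function.Surjective p → LinearMap.range i = LinearMap.ker p →
    ∃ r : X →ₗ[R] N, r ∘ₗ i = LinearMap.id

/-- `N` is `FPₙ^{≤d}`-injective: `Ext¹_R(K, N) = 0` for every finitely `n`-presented `K`
of projective dimension at most `d`. -/
def FPdInj (R : Type u) [Ring R] (n : ℕ) (d : ℕ∞) (N : Type u)
    [AddCommGroup N] [Module R N] : Prop :=
  ∀ (K : Type u) [AddCommGroup K] [Module R K],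
    FinNPres R n K → ProjDimLE' R d K → Ext1Zero R K N

/-- `M` is `FPₙ^{≤d}`-projective: `Ext¹_R(M, N) = 0` for every `FPₙ^{≤d}`-injective `N`. -/
def FPdProj (R : Type u) [Ring R] (n : ℕ) (d : ℕ∞) (M : Type u)
    [AddCommGroup M] [Module R M] : Prop :=
  ∀ (N : Type u) [AddCommGroup N] [Module R N], FPdInj R n d N → Ext1Zero R M N

section Aux

variable {R : Type u} [Ring R]

noncomputable def corestr {A B W : Type u} [AddCommGroup A] [Module R A] [AddCommGroup B]
    [Module R B] [AddCommGroup W] [Module R W] (i : A →ₗ[R] B) (hi : Function.Injective i)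
    (f : W →ₗ[R] B) (hf : ∀ w, f w ∈ LinearMap.range i) : W →ₗ[R] A :=
  (LinearEquiv.ofInjective i hi).symm.toLinearMap ∘ₗ f.codRestrict (LinearMap.range i) hf

theorem corestr_spec {A B W : Type u} [AddCommGroup A] [Module R A] [AddCommGroup B]
    [Module R B] [AddCommGroup W] [Module R W] (i : A →ₗ[R] B) (hi : Function.Injective i)
    (f : W →ₗ[R] B) (hf : ∀ w, f w ∈ LinearMap.range i) (w : W) :
    i (corestr i hi f hf w) = f w := by
  have h := (LinearEquiv.ofInjective i hi).apply_symm_apply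
    (f.codRestrict (LinearMap.range i) hf w)
  have h2 := congrArg (Subtype.val) h
  simpa [corestr] using h2

theorem exists_corestr {A B W : Type u} [AddCommGroup A] [Module R A] [AddCommGroup B]
    [Module R B] [AddCommGroup W] [Module R W] (i : A →ₗ[R] B) (hi : Function.Injective i)
    (f : W →ₗ[R] B) (hf : ∀ w, f w ∈ LinearMap.range i) :
    ∃ g : W →ₗ[R] A, ∀ w, i (g w) = f w :=
  ⟨corestr i hi f hf, corestr_spec i hi f hf⟩

theorem factor_surj {A B D : Type u} [AddCommGroup A] [Module R A] [AddCommGroup B] [Module R B]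
    [AddCommGroup D] [Module R D] (π : A →ₗ[R] B) (θ : A →ₗ[R] D)
    (hπ : Function.Surjective π) (hle : LinearMap.ker π ≤ LinearMap.ker θ) :
    ∃ t : B →ₗ[R] D, t ∘ₗ π = θ := by
  refine ⟨Submodule.liftQ (LinearMap.ker π) θ hle ∘ₗ
    (π.quotKerEquivOfSurjective hπ).symm.toLinearMap, ?_⟩
  ext a
  have h1 : (π.quotKerEquivOfSurjective hπ).symm (π a) = Submodule.Quotient.mk a := by
    apply (π.quotKerEquivOfSurjective hπ).injective
    simp [LinearMap.quotKerEquivOfSurjective]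
  simp [h1]

theorem section_of_retraction {N X K : Type u} [AddCommGroup N] [Module R N] [AddCommGroup X]
    [Module R X] [AddCommGroup K] [Module R K] (i : N →ₗ[R] X) (p : X →ₗ[R] K)
    (hp : Function.Surjective p) (hr : LinearMap.range i = LinearMap.ker p)
    (r : X →ₗ[R] N) (hri : r ∘ₗ i = LinearMap.id) :
    ∃ s : K →ₗ[R] X, p ∘ₗ s = LinearMap.id := by
  have hle : LinearMap.ker p ≤ LinearMap.ker ((LinearMap.id : X →ₗ[R] X) - i ∘ₗ r) := by
    intro x hx
    rw [← hr] at hx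
    obtain ⟨n, rfl⟩ := hx
    have h1 : r (i n) = n := congrFun (congrArg DFunLike.coe hri) n
    simp [LinearMap.mem_ker, h1]
  obtain ⟨t, ht⟩ := factor_surj p ((LinearMap.id : X →ₗ[R] X) - i ∘ₗ r) hp hle
  refine ⟨t, ?_⟩
  ext k
  obtain ⟨x, rfl⟩ := hp k
  have h2 : t (p x) = x - i (r x) := by
    have := congrFun (congrArg DFunLike.coe ht) x
    simpa using this
  have h3 : p (i (r x)) = 0 := by
    have : i (r x) ∈ LinearMap.ker p := hr ▸ LinearMap.mem_range_self i (r x)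
    simpa [LinearMap.mem_ker] using this
  simp [h2, h3]

theorem retraction_of_section {N X K : Type u} [AddCommGroup N] [Module R N] [AddCommGroup X]
    [Module R X] [AddCommGroup K] [Module R K] (i : N →ₗ[R] X) (p : X →ₗ[R] K)
    (hi : Function.Injective i) (hr : LinearMap.range i = LinearMap.ker p)
    (s : K →ₗ[R] X) (hs : p ∘ₗ s = LinearMap.id) :
    ∃ r : X →ₗ[R] N, r ∘ₗ i = LinearMap.id := by
  have hmem : ∀ x, ((LinearMap.id : X →ₗ[R] X) - s ∘ₗ p) x ∈ LinearMap.range i := by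
    intro x
    rw [hr]
    have h1 : p (s (p x)) = p x := congrFun (congrArg DFunLike.coe hs) (p x)
    simp [LinearMap.mem_ker, h1]
  refine ⟨corestr i hi _ hmem, ?_⟩
  ext n
  apply hi
  rw [LinearMap.comp_apply, corestr_spec]
  have h2 : p (i n) = 0 := by
    have : i n ∈ LinearMap.ker p := hr ▸ LinearMap.mem_range_self i n
    simpa [LinearMap.mem_ker] using this
  simp [h2]


theorem ext1zero_of_projective {K : Type u} [AddCommGroup K] [Module R K]
    (hK : Module.Projective R K) (N : Type u) [AddCommGroup N] [Module R N] :
    Ext1Zero R K N := by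
  intro X _ _ i p hi hp hr
  obtain ⟨s, hs⟩ := Module.projective_lifting_property p (LinearMap.id : K →ₗ[R] K) hp
  exact retraction_of_section i p hi hr s hs

theorem extend_of_ext1zero {K' P K C : Type u} [AddCommGroup K'] [Module R K']
    [AddCommGroup P] [Module R P] [AddCommGroup K] [Module R K] [AddCommGroup C] [Module R C]
    (ι : K' →ₗ[R] P) (π : P →ₗ[R] K) (hι : Function.Injective ι)
    (hπ : Function.Surjective π) (hex : LinearMap.range ι = LinearMap.ker π)
    (hC : Ext1Zero R K C) (h : K' →ₗ[R] C) : ∃ H : P →ₗ[R] C, H ∘ₗ ι = h := by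
  set S : Submodule R (C × P) := LinearMap.range (LinearMap.prod h (-ι)) with hS
  let inC : C →ₗ[R] ((C × P) ⧸ S) := S.mkQ ∘ₗ LinearMap.inl R C P
  let inP : P →ₗ[R] ((C × P) ⧸ S) := S.mkQ ∘ₗ LinearMap.inr R C P
  have hle : S ≤ LinearMap.ker (π ∘ₗ LinearMap.snd R C P) := by
    rintro ⟨c, x⟩ ⟨k', hk'⟩
    have hx : x = -ι k' := (congrArg Prod.snd hk').symm
    have : ι k' ∈ LinearMap.ker π := hex ▸ LinearMap.mem_range_self ι k'
    simp only [LinearMap.mem_ker] at this ⊢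
    simp [hx, this]
  let q : ((C × P) ⧸ S) →ₗ[R] K := S.liftQ (π ∘ₗ LinearMap.snd R C P) hle
  have hinC : Function.Injective inC := by
    rw [← LinearMap.ker_eq_bot, LinearMap.ker_eq_bot']
    intro c hc
    have : ((c, 0) : C × P) ∈ S := by
      rwa [← Submodule.Quotient.mk_eq_zero S]
    obtain ⟨k', hk'⟩ := this
    have h1 : -ι k' = 0 := congrArg Prod.snd hk'
    have h2 : k' = 0 := hι (by simpa [neg_eq_zero] using h1)
    have h3 : h k' = c := congrArg Prod.fst hk'
    rw [← h3, h2, map_zero]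
  have hq : Function.Surjective q := by
    intro k
    obtain ⟨x, hx⟩ := hπ k
    exact ⟨S.mkQ (0, x), by simp [q, hx]⟩
  have hrange : LinearMap.range inC = LinearMap.ker q := by
    ext w
    constructor
    · rintro ⟨c, rfl⟩
      simp [LinearMap.mem_ker, inC, q]
    · intro hw
      obtain ⟨⟨c, y⟩, rfl⟩ := S.mkQ_surjective w
      have hy : π y = 0 := by simpa [q, LinearMap.mem_ker] using hw
      have : y ∈ LinearMap.range ι := hex ▸ hy
      obtain ⟨x, rfl⟩ := this
      refine ⟨c + h x, ?_⟩
      show S.mkQ (c + h x, 0) = S.mkQ (c, ι x)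
      rw [Submodule.mkQ_apply, Submodule.mkQ_apply, Submodule.Quotient.eq]
      exact ⟨x, by simp [Prod.ext_iff]⟩
  obtain ⟨r, hrr⟩ := hC ((C × P) ⧸ S) inC q hinC hq hrange
  refine ⟨r ∘ₗ inP, ?_⟩
  ext x
  have key : inP (ι x) = inC (h x) := by
    show S.mkQ (0, ι x) = S.mkQ (h x, 0)
    rw [Submodule.mkQ_apply, Submodule.mkQ_apply, Submodule.Quotient.eq]
    exact ⟨-x, by simp [Prod.ext_iff]⟩
  have h4 : r (inC (h x)) = h x := congrFun (congrArg DFunLike.coe hrr) (h x)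
  simp only [LinearMap.comp_apply, key, h4]

theorem lift_of_ext1zero {N E C K'' : Type u} [AddCommGroup N] [Module R N]
    [AddCommGroup E] [Module R E] [AddCommGroup C] [Module R C] [AddCommGroup K''] [Module R K'']
    (α : N →ₗ[R] E) (β : E →ₗ[R] C) (hα : Function.Injective α) (hβ : Function.Surjective β)
    (hex : LinearMap.range α = LinearMap.ker β) (hN : Ext1Zero R K'' N)
    (h : K'' →ₗ[R] C) : ∃ H : K'' →ₗ[R] E, β ∘ₗ H = h := by
  set φ : (E × K'') →ₗ[R] C := β ∘ₗ LinearMap.fst R E K'' - h ∘ₗ LinearMap.snd R E K'' with hφ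
  set Y := LinearMap.ker φ with hY
  have hmemj : ∀ n, (LinearMap.inl R E K'' ∘ₗ α) n ∈ Y := by
    intro n
    have : α n ∈ LinearMap.ker β := hex ▸ LinearMap.mem_range_self α n
    simp only [LinearMap.mem_ker] at this
    simp [hY, φ, LinearMap.mem_ker, this]
  let j : N →ₗ[R] Y := LinearMap.codRestrict Y (LinearMap.inl R E K'' ∘ₗ α) hmemj
  let q : Y →ₗ[R] K'' := LinearMap.snd R E K'' ∘ₗ Y.subtype
  have hj : Function.Injective j := by
    intro a b hab
    have := congrArg (fun z => (Subtype.val z).1) hab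
    exact hα this
  have hq : Function.Surjective q := by
    intro k
    obtain ⟨e, he⟩ := hβ (h k)
    refine ⟨⟨(e, k), by simp [hY, φ, LinearMap.mem_ker, he]⟩, rfl⟩
  have hrange : LinearMap.range j = LinearMap.ker q := by
    ext y
    constructor
    · rintro ⟨n, rfl⟩
      simp [LinearMap.mem_ker, q, j]
    · intro hy
      obtain ⟨⟨e, k⟩, hm⟩ := y
      have hk : k = 0 := by simpa [q, LinearMap.mem_ker] using hy
      have hβe : β e = 0 := by
        have := hm
        simp only [hY, φ, LinearMap.mem_ker, LinearMap.sub_apply, LinearMap.comp_apply,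
          LinearMap.fst_apply, LinearMap.snd_apply, sub_eq_zero] at this
        rw [this, hk, map_zero]
      have : e ∈ LinearMap.range α := hex ▸ hβe
      obtain ⟨n, rfl⟩ := this
      exact ⟨n, Subtype.ext (by simp [j, hk])⟩
  obtain ⟨r, hr⟩ := hN Y j q hj hq hrange
  obtain ⟨s, hs⟩ := section_of_retraction j q hq hrange r hr
  refine ⟨LinearMap.fst R E K'' ∘ₗ Y.subtype ∘ₗ s, ?_⟩
  ext k
  have hk : ((s k : E × K'')).2 = k := congrFun (congrArg DFunLike.coe hs) k
  have hm := (s k).2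
  simp only [hY, φ, LinearMap.mem_ker, LinearMap.sub_apply, LinearMap.comp_apply,
    LinearMap.fst_apply, LinearMap.snd_apply, sub_eq_zero] at hm
  show β ((s k : E × K'')).1 = h k
  rw [hm, hk]


theorem exists_inj_emb (N : Type u) [AddCommGroup N] [Module R N] :
    ∃ (E : Type u) (_ : AddCommGroup E) (_ : Module R E) (α : N →ₗ[R] E),
      Function.Injective α ∧ Module.Injective R E := by
  let Nc : ModuleCat.{u} R := ModuleCat.of R N
  let E := CategoryTheory.Injective.under Nc
  have hE : CategoryTheory.Injective (ModuleCat.of R E) :=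
    inferInstanceAs (CategoryTheory.Injective E)
  have hinj : Module.Injective R E := Module.injective_module_of_injective_object R E
  have hmono : CategoryTheory.Mono (CategoryTheory.Injective.ι Nc) := inferInstance
  refine ⟨E, inferInstance, inferInstance, (CategoryTheory.Injective.ι Nc).hom, ?_, hinj⟩
  exact (ModuleCat.mono_iff_injective _).mp hmono


theorem projDimLE_zero (M : Type u) [AddCommGroup M] [Module R M] :
    ProjDimLE R 0 M ↔ Module.Projective R M := by rw [ProjDimLE]

theorem projDimLE_succ (d : ℕ) (M : Type u) [AddCommGroup M] [Module R M] :
    ProjDimLE R (d+1) M ↔ ∃ (ι : Type u) (f : (ι →₀ R) →ₗ[R] M), Function.Surjective f ∧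
      ProjDimLE R d (LinearMap.ker f) := by rw [ProjDimLE]

set_option maxHeartbeats 3000000 in
theorem main_aux (d : ℕ) : ∀ (M : Type u) [AddCommGroup M] [Module R M],
    (∀ (N : Type u) [AddCommGroup N] [Module R N],
      (∀ (K : Type u) [AddCommGroup K] [Module R K], ProjDimLE R d K → Ext1Zero R K N) →
      Ext1Zero R M N) → ProjDimLE R d M := by
  induction d with
  | zero =>
    intro M _ _ H
    rw [projDimLE_zero]
    set f := Finsupp.linearCombination R (id : M → M) with hfdef
    have hf : Function.Surjective f := Finsupp.linearCombination_id_surjective R M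
    have hM : Ext1Zero R M (LinearMap.ker f) := by
      apply H
      intro K _ _ hK
      exact ext1zero_of_projective ((projDimLE_zero K).mp hK) _
    obtain ⟨r, hr⟩ := hM (M →₀ R) (LinearMap.ker f).subtype f
      (Submodule.injective_subtype _) hf (Submodule.range_subtype _)
    obtain ⟨s, hs⟩ := section_of_retraction (N := ↥(LinearMap.ker f)) (LinearMap.ker f).subtype f hf
      (Submodule.range_subtype _) r hr
    exact Module.Projective.of_split s f hs
  | succ d ih =>
    intro M _ _ H
    set f := Finsupp.linearCombination R (id : M → M) with hfdef
    have hf : Function.Surjective f := Finsupp.linearCombination_id_surjective R M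
    rw [projDimLE_succ]
    refine ⟨M, f, hf, ?_⟩
    apply ih
    intro N _ _ hN
    obtain ⟨E, _, _, α, hα, hEinj⟩ := exists_inj_emb (R := R) N
    set β := (LinearMap.range α).mkQ with hβdef
    have hβ : Function.Surjective β := Submodule.mkQ_surjective _
    have hexNE : LinearMap.range α = LinearMap.ker β := (Submodule.ker_mkQ _).symm
    -- Step 1: the cosyzygy C = E ⧸ range α satisfies Ext¹(K, C) = 0 for every K with pd ≤ d+1
    have hC : ∀ (K : Type u) [AddCommGroup K] [Module R K],
        ProjDimLE R (d+1) K → Ext1Zero R K (E ⧸ LinearMap.range α) := by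
      intro K _ _ hK
      obtain ⟨ι', π, hπ, hker⟩ := (projDimLE_succ d K).mp hK
      have hK''N : Ext1Zero R (LinearMap.ker π) N := hN _ hker
      intro X _ _ i p hi hp hrange
      obtain ⟨g, hg⟩ := Module.projective_lifting_property p π hp
      have hgπ : ∀ x, p (g x) = π x := congrFun (congrArg DFunLike.coe hg)
      let gι : ↥(LinearMap.ker π) →ₗ[R] X := g ∘ₗ (LinearMap.ker π).subtype
      have hmem : ∀ y, gι y ∈ LinearMap.range i := by
        intro y
        rw [hrange]
        show p (g ((LinearMap.ker π).subtype y)) = 0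
        rw [hgπ]
        exact y.2
      obtain ⟨h, hspec⟩ := exists_corestr (A := E ⧸ LinearMap.range α) (B := X)
        (W := ↥(LinearMap.ker π)) i hi gι hmem
      obtain ⟨Hl, hHl⟩ := lift_of_ext1zero α β hα hβ hexNE hK''N h
      have hHl' : ∀ y, β (Hl y) = h y := congrFun (congrArg DFunLike.coe hHl)
      obtain ⟨G, hG⟩ := hEinj.out (X := ↥(LinearMap.ker π)) (Y := ι' →₀ R)
        (LinearMap.ker π).subtype (Submodule.injective_subtype _) Hl
      have hle : LinearMap.ker π ≤ LinearMap.ker (g - i ∘ₗ (β ∘ₗ G)) := by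
        intro y hy
        have h1 : G y = Hl ⟨y, hy⟩ := hG ⟨y, hy⟩
        have h2 : i (h ⟨y, hy⟩) = g y := hspec ⟨y, hy⟩
        simp only [LinearMap.mem_ker, LinearMap.sub_apply, LinearMap.comp_apply, h1, hHl' ⟨y, hy⟩,
          h2, sub_self]
      obtain ⟨t, ht⟩ := factor_surj π (g - i ∘ₗ (β ∘ₗ G)) hπ hle
      have ht' : ∀ x, t (π x) = g x - i (β (G x)) := by
        intro x
        have := congrFun (congrArg DFunLike.coe ht) x
        simpa using this
      have hpt : p ∘ₗ t = LinearMap.id := by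
        ext k
        obtain ⟨x, rfl⟩ := hπ k
        have h3 : p (i (β (G x))) = 0 := by
          have : i (β (G x)) ∈ LinearMap.ker p := hrange ▸ LinearMap.mem_range_self i _
          simpa [LinearMap.mem_ker] using this
        simp [ht' x, h3, hgπ x]
      exact retraction_of_section i p hi hrange t hpt
    -- Step 2: hence Ext¹(M, C) = 0
    have hMC : Ext1Zero R M (E ⧸ LinearMap.range α) := H _ hC
    -- Step 3: shift back to get Ext¹(ker f, N) = 0
    intro X _ _ a b ha hb hrangeab
    obtain ⟨g, hg⟩ := hEinj.out (X := N) (Y := X) a ha α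
    have hleb : LinearMap.ker b ≤ LinearMap.ker (β ∘ₗ g) := by
      intro x hx
      rw [← hrangeab] at hx
      obtain ⟨n, rfl⟩ := hx
      have h1 : α n ∈ LinearMap.ker β := hexNE ▸ LinearMap.mem_range_self α n
      simp only [LinearMap.mem_ker, LinearMap.comp_apply, hg n]
      simpa [LinearMap.mem_ker] using h1
    obtain ⟨h, hh⟩ : ∃ t : ↥(LinearMap.ker f) →ₗ[R] (E ⧸ LinearMap.range α),
        t ∘ₗ b = β ∘ₗ g := factor_surj (B := ↥(LinearMap.ker f)) b (β ∘ₗ g) hb hleb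
    have hh' : ∀ x, h (b x) = β (g x) := by
      intro x
      have := congrFun (congrArg DFunLike.coe hh) x
      simpa using this
    obtain ⟨H', hH'⟩ : ∃ H : (M →₀ R) →ₗ[R] (E ⧸ LinearMap.range α),
        H ∘ₗ (LinearMap.ker f).subtype = h := extend_of_ext1zero (K' := ↥(LinearMap.ker f)) (P := M →₀ R) (K := M)
      (C := E ⧸ LinearMap.range α) (LinearMap.ker f).subtype f
      (Submodule.injective_subtype _) hf (Submodule.range_subtype _) hMC h
    have hH'' : ∀ y, H' ((LinearMap.ker f).subtype y) = h y :=
      congrFun (congrArg DFunLike.coe hH')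
    obtain ⟨G, hG⟩ := Module.projective_lifting_property β H' hβ
    have hG' : ∀ x, β (G x) = H' x := congrFun (congrArg DFunLike.coe hG)
    set g' := g - G ∘ₗ ((LinearMap.ker f).subtype ∘ₗ b) with hg'def
    have hmem' : ∀ x, g' x ∈ LinearMap.range α := by
      intro x
      rw [hexNE]
      simp only [LinearMap.mem_ker, hg'def, LinearMap.sub_apply, LinearMap.comp_apply, map_sub]
      rw [hG', hH'', hh']
      exact sub_self _
    obtain ⟨rfin, hrfin⟩ := exists_corestr α hα g' hmem'
    refine ⟨rfin, ?_⟩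
    ext n
    apply hα
    rw [LinearMap.comp_apply, hrfin]
    have hba : b (a n) = 0 := by
      have : a n ∈ LinearMap.ker b := hrangeab ▸ LinearMap.mem_range_self a n
      simpa [LinearMap.mem_ker] using this
    simp [hg'def, hba, hg n]

end Aux

/-- Every `FPₙ^{≤d}`-projective `R`-module has projective dimension at most `d`. -/
theorem fpdProj_projDimLE (R : Type u) [Ring R] (n : ℕ) (hn : 1 ≤ n) (d : ℕ) (hd : 1 ≤ d)
    (M : Type u) [AddCommGroup M] [Module R M] (hM : FPdProj R n (d : ℕ∞) M) :
    ProjDimLE R d M := by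
  apply main_aux (R := R) d M
  intro N _ _ hN
  exact hM N (fun K _ _ _ hpd => hN K (hpd d rfl))
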